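/- arXiv:2209.14587 — 2 statements merged into one kernel-verified Lean document; each statement's English description precedes it below -/
import Mathlib

section
/- With T ~ Weibull(θ,β) and C ~ Weibull(θ,α) independent with common shape θ, the joint density of (Y,Δ) = (min(T,C), I(T≤C)) factorizes as p(y,δ) = φ^δ(1−φ)^{1−δ} · p_W(y | k, λ), where φ = α^θ/(α^θ + β^θ), k = θ, and λ = β/(1 + (β/α)^θ)^{1/θ}; i.e., Δ is Bernoulli(φ), Y is Weibull(k,λ), and Y and Δ are independent. -/
open Real MeasureTheory ProbabilityTheory Set Filter

/-- Weibull density with shape `k` and scale `lam`, extended by `0` off `(0,∞)`. -/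
noncomputable def weibullPDF (k lam t : ℝ) : ℝ :=
  if 0 < t then (k / lam ^ k) * t ^ (k - 1) * Real.exp (-(t / lam) ^ k) else 0

lemma weibullPDF_measurable (k lam : ℝ) : Measurable (weibullPDF k lam) := by
  unfold weibullPDF
  refine Measurable.ite measurableSet_Ioi ?_ measurable_const
  fun_prop

lemma weibullPDF_nonneg {k lam : ℝ} (hk : 0 < k) (hl : 0 < lam) (t : ℝ) :
    0 ≤ weibullPDF k lam t := by
  unfold weibullPDF
  split
  · positivity
  · exact le_rfl

lemma weibullPDF_hasDeriv {θ s : ℝ} (hθ : 0 < θ) (hs : 0 < s) {x : ℝ} (hx : 0 < x) :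
    HasDerivAt (fun c => -Real.exp (-(c / s) ^ θ)) (weibullPDF θ s x) x := by
  have h1 : HasDerivAt (fun c : ℝ => c / s) (1 / s) x := by
    simpa using (hasDerivAt_id x).div_const s
  have h2 : HasDerivAt (fun y : ℝ => y ^ θ) (θ * (x / s) ^ (θ - 1)) (x / s) :=
    Real.hasDerivAt_rpow_const (Or.inl (by positivity))
  have h3 : HasDerivAt (fun c => -Real.exp (-(c / s) ^ θ))
      (-(Real.exp (-(x / s) ^ θ) * -(θ * (x / s) ^ (θ - 1) * (1 / s)))) x :=
    by have := (h2.comp x h1).neg.exp.neg; exact this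
  convert h3 using 1
  have hxs : (x / s) ^ (θ - 1) = x ^ (θ - 1) / s ^ (θ - 1) := Real.div_rpow hx.le hs.le _
  have hsθ : s ^ (θ - 1) * s = s ^ θ := by
    nth_rewrite 2 [← Real.rpow_one s]
    rw [← Real.rpow_add hs]
    norm_num
  rw [weibullPDF, if_pos hx, hxs]
  field_simp
  rw [← hsθ]
  ring

lemma weibull_tendsto {θ s : ℝ} (hθ : 0 < θ) (hs : 0 < s) :
    Tendsto (fun c : ℝ => -Real.exp (-(c / s) ^ θ)) atTop (nhds 0) := by
  have h1 : Tendsto (fun c : ℝ => (c / s) ^ θ) atTop atTop :=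
    (tendsto_rpow_atTop hθ).comp (tendsto_id.atTop_div_const hs)
  have := (Real.tendsto_exp_atBot.comp (tendsto_neg_atTop_atBot.comp h1)).neg
  simpa using this

lemma weibull_integrableOn {θ s : ℝ} (hθ : 0 < θ) (hs : 0 < s) {t : ℝ} (ht : 0 < t) :
    IntegrableOn (weibullPDF θ s) (Ioi t) := by
  refine integrableOn_Ioi_deriv_of_nonneg' (g := fun c => -Real.exp (-(c / s) ^ θ))
    (fun x hx => weibullPDF_hasDeriv hθ hs (lt_of_lt_of_le ht hx)) ?_ (weibull_tendsto hθ hs)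
  exact fun x _ => weibullPDF_nonneg hθ hs x

lemma weibull_survival {θ s : ℝ} (hθ : 0 < θ) (hs : 0 < s) {t : ℝ} (ht : 0 < t) :
    ∫⁻ c in Ioi t, ENNReal.ofReal (weibullPDF θ s c) =
      ENNReal.ofReal (Real.exp (-(t / s) ^ θ)) := by
  rw [← ofReal_integral_eq_lintegral_ofReal (weibull_integrableOn hθ hs ht)
    (Eventually.of_forall fun x => weibullPDF_nonneg hθ hs x)]
  congr 1
  have := integral_Ioi_of_hasDerivAt_of_nonneg' (g := fun c => -Real.exp (-(c / s) ^ θ))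
    (g' := weibullPDF θ s) (a := t)
    (fun x hx => weibullPDF_hasDeriv hθ hs (lt_of_lt_of_le ht hx))
    (fun x _ => weibullPDF_nonneg hθ hs x) (weibull_tendsto hθ hs)
  rw [this]; ring

lemma weibull_factor {θ α β : ℝ} (hθ : 0 < θ) (hα : 0 < α) (hβ : 0 < β) (t : ℝ) :
    Real.exp (-(t / α) ^ θ) * weibullPDF θ β t
      = (α ^ θ / (α ^ θ + β ^ θ)) * weibullPDF θ (β / (1 + (β / α) ^ θ) ^ (1 / θ)) t ∧
    Real.exp (-(t / β) ^ θ) * weibullPDF θ α t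
      = (β ^ θ / (α ^ θ + β ^ θ)) * weibullPDF θ (β / (1 + (β / α) ^ θ) ^ (1 / θ)) t := by
  set lam := β / (1 + (β / α) ^ θ) ^ (1 / θ) with hlamdef
  have hA : (0:ℝ) < α ^ θ := Real.rpow_pos_of_pos hα θ
  have hB : (0:ℝ) < β ^ θ := Real.rpow_pos_of_pos hβ θ
  have hba : (β / α) ^ θ = β ^ θ / α ^ θ := Real.div_rpow hβ.le hα.le θ
  have hbase : (0:ℝ) < 1 + (β / α) ^ θ := by rw [hba]; positivity
  have hlam : 0 < lam := by rw [hlamdef]; positivity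
  have hlamθ : lam ^ θ = α ^ θ * β ^ θ / (α ^ θ + β ^ θ) := by
    rw [hlamdef, Real.div_rpow hβ.le (Real.rpow_pos_of_pos hbase _).le,
      ← Real.rpow_mul hbase.le, one_div_mul_cancel hθ.ne', Real.rpow_one, hba]
    field_simp
  rcases le_or_gt t 0 with ht | ht
  · rw [weibullPDF, if_neg (not_lt.2 ht), weibullPDF, if_neg (not_lt.2 ht),
      weibullPDF, if_neg (not_lt.2 ht)]
    constructor <;> ring
  · have htθ : (t / lam) ^ θ = (t / α) ^ θ + (t / β) ^ θ := by
      rw [Real.div_rpow ht.le hlam.le, Real.div_rpow ht.le hα.le,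
        Real.div_rpow ht.le hβ.le, hlamθ]
      field_simp
      ring
    rw [weibullPDF, if_pos ht, weibullPDF, if_pos ht, weibullPDF, if_pos ht, hlamθ, htθ]
    rw [neg_add, Real.exp_add]
    constructor
    · field_simp
    · field_simp

open Real MeasureTheory ProbabilityTheory

lemma weibull_withDensity_Ioi {θ s : ℝ} (hθ : 0 < θ) (hs : 0 < s) {t : ℝ} (ht : 0 < t) :
    (volume.withDensity fun c => ENNReal.ofReal (weibullPDF θ s c)) (Ioi t)
      = ENNReal.ofReal (Real.exp (-(t / s) ^ θ)) := by
  rw [withDensity_apply _ measurableSet_Ioi, weibull_survival hθ hs ht]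

lemma weibull_withDensity_Ici {θ s : ℝ} (hθ : 0 < θ) (hs : 0 < s) {t : ℝ} (ht : 0 < t) :
    (volume.withDensity fun c => ENNReal.ofReal (weibullPDF θ s c)) (Ici t)
      = ENNReal.ofReal (Real.exp (-(t / s) ^ θ)) := by
  rw [withDensity_apply _ measurableSet_Ici,
    Measure.restrict_congr_set (Ioi_ae_eq_Ici (a := t)).symm, weibull_survival hθ hs ht]

theorem weibull_min_indicator_factorization
    {Ω : Type*} [MeasurableSpace Ω] (μ : Measure Ω) [IsProbabilityMeasure μ]
    (θ α β : ℝ) (hθ : 0 < θ) (hα : 0 < α) (hβ : 0 < β)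
    (T C : Ω → ℝ) (hT : Measurable T) (hC : Measurable C)
    (hTC : IndepFun T C μ)
    (hTlaw : μ.map T = volume.withDensity fun t => ENNReal.ofReal (weibullPDF θ β t))
    (hClaw : μ.map C = volume.withDensity fun t => ENNReal.ofReal (weibullPDF θ α t))
    (Y : Ω → ℝ) (hY : Y = fun ω => min (T ω) (C ω))
    (Δ : Ω → ℕ) (hΔ : Δ = fun ω => if T ω ≤ C ω then 1 else 0)
    (φ k lam : ℝ) (hφ : φ = α ^ θ / (α ^ θ + β ^ θ)) (hk : k = θ)
    (hlam : lam = β / (1 + (β / α) ^ θ) ^ (1 / θ)) :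
    IndepFun Y Δ μ ∧
      μ.map Y = volume.withDensity (fun t => ENNReal.ofReal (weibullPDF k lam t)) ∧
      μ {ω | Δ ω = 1} = ENNReal.ofReal φ ∧
      μ {ω | Δ ω = 0} = ENNReal.ofReal (1 - φ) := by
  subst hk
  have hA : (0:ℝ) < α ^ k := Real.rpow_pos_of_pos hα k
  have hB : (0:ℝ) < β ^ k := Real.rpow_pos_of_pos hβ k
  have hφ0 : 0 < φ := by rw [hφ]; positivity
  have h1φ : 1 - φ = β ^ k / (α ^ k + β ^ k) := by rw [hφ]; field_simp; ring
  have h1φ0 : 0 < 1 - φ := by rw [h1φ]; positivity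
  have hlam0 : 0 < lam := by
    rw [hlam]
    have : (0:ℝ) < 1 + (β / α) ^ k := by positivity
    positivity
  -- the target Weibull(k, lam) "measure" given as a set-lintegral
  set M : Set ℝ → ENNReal := fun A => ∫⁻ x in A, ENNReal.ofReal (weibullPDF k lam x) with hM
  have hjoint : μ.map (fun ω => (T ω, C ω)) = (μ.map T).prod (μ.map C) :=
    (indepFun_iff_map_prod_eq_prod_map_map hT.aemeasurable hC.aemeasurable).mp hTC
  have hmY : Measurable Y := by rw [hY]; exact hT.min hC
  have hsurvC : ∀ t : ℝ, 0 < t →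
      μ.map C (Ici t) = ENNReal.ofReal (Real.exp (-(t / α) ^ k)) := fun t ht => by
    rw [hClaw]; exact weibull_withDensity_Ici hθ hα ht
  have hsurvT : ∀ t : ℝ, 0 < t →
      μ.map T (Ioi t) = ENNReal.ofReal (Real.exp (-(t / β) ^ k)) := fun t ht => by
    rw [hTlaw]; exact weibull_withDensity_Ioi hθ hβ ht
  have hantiC : Measurable fun t : ℝ => μ.map C (Ici t) :=
    Antitone.measurable fun a b hab => measure_mono (Ici_subset_Ici.2 hab)
  have hmonoT : Measurable fun t : ℝ => μ.map T (Ioi t) :=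
    Antitone.measurable fun a b hab => measure_mono (Ioi_subset_Ioi hab)
  have hmlam : Measurable fun t : ℝ => ENNReal.ofReal (weibullPDF k lam t) :=
    (weibullPDF_measurable k lam).ennreal_ofReal
  -- case Δ = 1
  have h1 : ∀ A : Set ℝ, MeasurableSet A →
      μ (Y ⁻¹' A ∩ {ω | T ω ≤ C ω}) = ENNReal.ofReal φ * M A := by
    intro A hA'
    have hSm : MeasurableSet {p : ℝ × ℝ | p.1 ∈ A ∧ p.1 ≤ p.2} :=
      (measurable_fst hA').inter (measurableSet_le measurable_fst measurable_snd)
    have hset : Y ⁻¹' A ∩ {ω | T ω ≤ C ω}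
        = (fun ω => (T ω, C ω)) ⁻¹' {p : ℝ × ℝ | p.1 ∈ A ∧ p.1 ≤ p.2} := by
      ext ω
      simp only [hY, mem_inter_iff, mem_preimage, mem_setOf_eq]
      constructor
      · rintro ⟨h1, h2⟩; exact ⟨by rwa [min_eq_left h2] at h1, h2⟩
      · rintro ⟨h1, h2⟩; exact ⟨by rwa [min_eq_left h2], h2⟩
    rw [hset, ← Measure.map_apply (hT.prodMk hC) hSm, hjoint, Measure.prod_apply hSm]
    have hslice : (fun t => μ.map C (Prod.mk t ⁻¹' {p : ℝ × ℝ | p.1 ∈ A ∧ p.1 ≤ p.2}))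
        = A.indicator fun t => μ.map C (Ici t) := by
      funext t
      by_cases htA : t ∈ A
      · rw [Set.indicator_of_mem htA]
        congr 1
        ext c
        simp [htA]
      · rw [Set.indicator_of_notMem htA]
        have he : Prod.mk t ⁻¹' {p : ℝ × ℝ | p.1 ∈ A ∧ p.1 ≤ p.2} = ∅ := by
          ext c; simp [htA]
        rw [he, measure_empty]
    rw [hslice, hTlaw, lintegral_withDensity_eq_lintegral_mul volume
      (weibullPDF_measurable k β).ennreal_ofReal (hantiC.indicator hA')]
    have hptw : ∀ t : ℝ,
        (((fun t => ENNReal.ofReal (weibullPDF k β t)) *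
          A.indicator fun t => μ.map C (Ici t)) t)
        = ENNReal.ofReal φ * A.indicator (fun t => ENNReal.ofReal (weibullPDF k lam t)) t := by
      intro t
      by_cases htA : t ∈ A
      · simp only [Pi.mul_apply, Set.indicator_of_mem htA]
        rcases lt_or_ge 0 t with ht | ht
        · rw [hsurvC t ht, ← ENNReal.ofReal_mul (weibullPDF_nonneg hθ hβ t),
            mul_comm (weibullPDF k β t), hlam, (weibull_factor hθ hα hβ t).1, ← hφ,
            ENNReal.ofReal_mul hφ0.le, ← hlam]
        · have : weibullPDF k β t = 0 := by rw [weibullPDF, if_neg (not_lt.2 ht)]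
          have h2 : weibullPDF k lam t = 0 := by rw [weibullPDF, if_neg (not_lt.2 ht)]
          simp [this, h2]
      · simp [Set.indicator_of_notMem htA]
    rw [lintegral_congr hptw, lintegral_const_mul _ (hmlam.indicator hA'),
      lintegral_indicator hA' _]
  -- case Δ = 0
  have h0 : ∀ A : Set ℝ, MeasurableSet A →
      μ (Y ⁻¹' A ∩ {ω | C ω < T ω}) = ENNReal.ofReal (1 - φ) * M A := by
    intro A hA'
    have hSm : MeasurableSet {p : ℝ × ℝ | p.2 ∈ A ∧ p.2 < p.1} :=
      (measurable_snd hA').inter (measurableSet_lt measurable_snd measurable_fst)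
    have hset : Y ⁻¹' A ∩ {ω | C ω < T ω}
        = (fun ω => (T ω, C ω)) ⁻¹' {p : ℝ × ℝ | p.2 ∈ A ∧ p.2 < p.1} := by
      ext ω
      simp only [hY, mem_inter_iff, mem_preimage, mem_setOf_eq]
      constructor
      · rintro ⟨h1, h2⟩; exact ⟨by rwa [min_eq_right h2.le] at h1, h2⟩
      · rintro ⟨h1, h2⟩; exact ⟨by rwa [min_eq_right h2.le], h2⟩
    rw [hset, ← Measure.map_apply (hT.prodMk hC) hSm, hjoint, Measure.prod_apply_symm hSm]
    have hslice : (fun c => μ.map T ((fun t => (t, c)) ⁻¹' {p : ℝ × ℝ | p.2 ∈ A ∧ p.2 < p.1}))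
        = A.indicator fun c => μ.map T (Ioi c) := by
      funext c
      by_cases hcA : c ∈ A
      · rw [Set.indicator_of_mem hcA]
        congr 1
        ext x
        simp [hcA]
      · rw [Set.indicator_of_notMem hcA]
        have he : (fun t => (t, c)) ⁻¹' {p : ℝ × ℝ | p.2 ∈ A ∧ p.2 < p.1} = ∅ := by
          ext x; simp [hcA]
        rw [he, measure_empty]
    rw [hslice, hClaw, lintegral_withDensity_eq_lintegral_mul volume
      (weibullPDF_measurable k α).ennreal_ofReal (hmonoT.indicator hA')]
    have hptw : ∀ t : ℝ,
        (((fun t => ENNReal.ofReal (weibullPDF k α t)) *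
          A.indicator fun c => μ.map T (Ioi c)) t)
        = ENNReal.ofReal (1 - φ) * A.indicator
            (fun t => ENNReal.ofReal (weibullPDF k lam t)) t := by
      intro t
      by_cases htA : t ∈ A
      · simp only [Pi.mul_apply, Set.indicator_of_mem htA]
        rcases lt_or_ge 0 t with ht | ht
        · rw [hsurvT t ht, ← ENNReal.ofReal_mul (weibullPDF_nonneg hθ hα t),
            mul_comm (weibullPDF k α t), hlam, (weibull_factor hθ hα hβ t).2, ← h1φ,
            ENNReal.ofReal_mul h1φ0.le, ← hlam]
        · have : weibullPDF k α t = 0 := by rw [weibullPDF, if_neg (not_lt.2 ht)]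
          have h2 : weibullPDF k lam t = 0 := by rw [weibullPDF, if_neg (not_lt.2 ht)]
          simp [this, h2]
      · simp [Set.indicator_of_notMem htA]
    rw [lintegral_congr hptw, lintegral_const_mul _ (hmlam.indicator hA'),
      lintegral_indicator hA' _]
  -- total mass of the target density is 1
  have hle : MeasurableSet {ω | T ω ≤ C ω} := measurableSet_le hT hC
  have hcompl : {ω | T ω ≤ C ω}ᶜ = {ω | C ω < T ω} := by
    ext ω; simp [not_le]
  have hsplit : ∀ s : Set Ω, MeasurableSet s →
      μ (s ∩ {ω | T ω ≤ C ω}) + μ (s ∩ {ω | C ω < T ω}) = μ s := by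
    intro s hs
    rw [← hcompl, ← Set.diff_eq]
    exact measure_inter_add_diff s hle
  have hIuniv : Y ⁻¹' univ = univ := by simp
  have htot := hsplit univ MeasurableSet.univ
  rw [← hIuniv, h1 univ MeasurableSet.univ, h0 univ MeasurableSet.univ,
    hIuniv, measure_univ] at htot
  have hsum : ENNReal.ofReal φ + ENNReal.ofReal (1 - φ) = 1 := by
    rw [← ENNReal.ofReal_add hφ0.le h1φ0.le]
    norm_num
  have hMuniv : M univ = 1 := by
    have : (ENNReal.ofReal φ + ENNReal.ofReal (1 - φ)) * M univ = 1 := by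
      rw [add_mul]; exact htot
    rwa [hsum, one_mul] at this
  -- measure of Y ⁻¹' A
  have hYs : ∀ A : Set ℝ, MeasurableSet A → μ (Y ⁻¹' A) = M A := by
    intro A hA'
    rw [← hsplit _ (hmY hA'), h1 A hA', h0 A hA', ← add_mul, hsum, one_mul]
  -- Δ probabilities
  have hδ1 : {ω | Δ ω = 1} = {ω | T ω ≤ C ω} := by
    ext ω; by_cases h : T ω ≤ C ω <;> simp [hΔ, h]
  have hδ0 : {ω | Δ ω = 0} = {ω | C ω < T ω} := by
    ext ω; by_cases h : T ω ≤ C ω <;> simp [hΔ, h, not_le]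
  have hP1 : μ {ω | T ω ≤ C ω} = ENNReal.ofReal φ := by
    have := h1 univ MeasurableSet.univ
    rwa [hIuniv, Set.univ_inter, hMuniv, mul_one] at this
  have hP0 : μ {ω | C ω < T ω} = ENNReal.ofReal (1 - φ) := by
    have := h0 univ MeasurableSet.univ
    rwa [hIuniv, Set.univ_inter, hMuniv, mul_one] at this
  refine ⟨?_, ?_, ?_, ?_⟩
  · -- independence
    rw [indepFun_iff_measure_inter_preimage_eq_mul]
    intro s t hs ht
    have hmΔ : Measurable Δ := by
      rw [hΔ]; exact Measurable.ite hle measurable_const measurable_const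
    by_cases h1t : (1 : ℕ) ∈ t <;> by_cases h0t : (0 : ℕ) ∈ t
    · have : Δ ⁻¹' t ⊇ univ := fun ω _ => by
        by_cases h : T ω ≤ C ω <;> simp [hΔ, h, h1t, h0t]
      have hΔt : Δ ⁻¹' t = univ := eq_univ_of_univ_subset this
      rw [hΔt, Set.inter_univ, hYs s hs, measure_univ, mul_one]
    · have hΔt : Δ ⁻¹' t = {ω | T ω ≤ C ω} := by
        ext ω; by_cases h : T ω ≤ C ω <;> simp [hΔ, h, h1t, h0t]
      rw [hΔt, h1 s hs, hYs s hs, hP1, mul_comm]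
    · have hΔt : Δ ⁻¹' t = {ω | C ω < T ω} := by
        ext ω
        by_cases h : T ω ≤ C ω
        · simp [hΔ, h, h1t, not_lt.2 h]
        · simp [hΔ, h, h0t, not_le.mp h]
      rw [hΔt, h0 s hs, hYs s hs, hP0, mul_comm]
    · have hΔt : Δ ⁻¹' t = ∅ := by
        ext ω; by_cases h : T ω ≤ C ω <;> simp [hΔ, h, h1t, h0t]
      rw [hΔt, Set.inter_empty, measure_empty, mul_zero]
  · -- law of Y
    ext A hA'
    rw [Measure.map_apply hmY hA', hYs A hA', withDensity_apply _ hA']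
  · rw [hδ1, hP1]
  · rw [hδ0, hP0]
end

section
/- Under type I censoring at time c > 0, the KL divergence between Exponential(λ₀) and Exponential(λ₁), defined as the KL divergence of the joint laws of (min(T,c), I(T≤c)), equals (1 − exp(−c/λ₀))·(λ₀/λ₁ + log(λ₁/λ₀) − 1). -/
open Real MeasureTheory

theorem exponential_typeI_censored_kl (c lam₀ lam₁ : ℝ) (hc : 0 < c)
    (h₀ : 0 < lam₀) (h₁ : 0 < lam₁) :
    (∫ t in Set.Ioo (0 : ℝ) c,
        (Real.exp (-t / lam₀) / lam₀) *
          Real.log ((Real.exp (-t / lam₀) / lam₀) / (Real.exp (-t / lam₁) / lam₁))) +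
      Real.exp (-c / lam₀) * Real.log (Real.exp (-c / lam₀) / Real.exp (-c / lam₁)) =
    (1 - Real.exp (-c / lam₀)) * (lam₀ / lam₁ + Real.log (lam₁ / lam₀) - 1) := by
  set A := Real.log lam₁ - Real.log lam₀ with hA
  set B := 1 / lam₁ - 1 / lam₀ with hB
  have hlogpt : ∀ t : ℝ,
      Real.log ((Real.exp (-t / lam₀) / lam₀) / (Real.exp (-t / lam₁) / lam₁))
        = A + B * t := by
    intro t
    rw [Real.log_div (by positivity) (by positivity),
      Real.log_div (Real.exp_ne_zero _) h₀.ne',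
      Real.log_div (Real.exp_ne_zero _) h₁.ne', Real.log_exp, Real.log_exp,
      hA, hB]
    field_simp
    ring
  set F : ℝ → ℝ := fun t => -(Real.exp (-t / lam₀) * (A + B * t + B * lam₀)) with hF
  have hderiv : ∀ t ∈ Set.uIcc (0:ℝ) c,
      HasDerivAt F (Real.exp (-t / lam₀) / lam₀ * (A + B * t)) t := by
    intro t _
    have h1 : HasDerivAt (fun t : ℝ => -t / lam₀) (-1 / lam₀) t := by
      simpa using ((hasDerivAt_id t).neg.div_const lam₀)
    have h2 := h1.exp
    have h3 : HasDerivAt (fun t : ℝ => A + B * t + B * lam₀) B t := by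
      simpa using (((hasDerivAt_id t).const_mul B).const_add A).add_const (B * lam₀)
    have h4 := (h2.mul h3).neg
    refine HasDerivAt.congr_deriv h4 ?_
    field_simp
    ring
  have hcont : ContinuousOn
      (fun t => Real.exp (-t / lam₀) / lam₀ * (A + B * t)) (Set.uIcc (0:ℝ) c) := by
    fun_prop
  have hFTC := intervalIntegral.integral_eq_sub_of_hasDerivAt hderiv
    (hcont.intervalIntegrable)
  have hIoo : (∫ t in Set.Ioo (0 : ℝ) c,
        (Real.exp (-t / lam₀) / lam₀) *
          Real.log ((Real.exp (-t / lam₀) / lam₀) / (Real.exp (-t / lam₁) / lam₁)))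
      = F c - F 0 := by
    rw [← hFTC, intervalIntegral.integral_of_le hc.le,
      ← MeasureTheory.integral_Ioc_eq_integral_Ioo]
    refine setIntegral_congr_fun measurableSet_Ioc ?_
    intro t _
    simp only [hlogpt]
  rw [hIoo, hF, Real.log_div (Real.exp_ne_zero _) (Real.exp_ne_zero _),
    Real.log_exp, Real.log_exp, Real.log_div h₁.ne' h₀.ne', ← hA]
  simp only [hB]
  field_simp
  norm_num
  ring
end
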